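/- Let b(n) denote the number of partition triples π = (π₁, π₂, π₃) of n such that π₁ consists of distinct odd parts, and π₂ and π₃ consist of parts divisible by 4 (with b(0) = 1). Then b(3n+2) ≡ 0 (mod 3) for all n ≥ 0. -/

import Mathlib

open PowerSeries

/-- `bTriple n` is the number of partition triples `(π₁, π₂, π₃)` of `n` such that
`π₁` has distinct odd parts and all parts of `π₂` and `π₃` are (positive and)
divisible by `4`. -/
noncomputable def bTriple (n : ℕ) : ℕ :=
  Nat.card {t : Multiset ℕ × Multiset ℕ × Multiset ℕ //
    t.1.sum + t.2.1.sum + t.2.2.sum = n ∧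
    t.1.Nodup ∧ (∀ x ∈ t.1, Odd x) ∧
    (∀ x ∈ t.2.1, 0 < x ∧ 4 ∣ x) ∧
    (∀ x ∈ t.2.2, 0 < x ∧ 4 ∣ x)}

section BTAux
open Finset

namespace BT

/-! ### Generic convolution counting lemma -/

def convEquiv {A B : Type*} (f : A → ℕ) (g : B → ℕ) (P : A → Prop) (Q : B → Prop) (n : ℕ) :
    {x : A × B // f x.1 + g x.2 = n ∧ P x.1 ∧ Q x.2} ≃
      Σ ij : (Finset.HasAntidiagonal.antidiagonal n : Finset (ℕ × ℕ)),
        ({a : A // f a = (ij : ℕ × ℕ).1 ∧ P a} × {b : B // g b = (ij : ℕ × ℕ).2 ∧ Q b}) where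
  toFun x := ⟨⟨(f x.1.1, g x.1.2), by
      simp only [Finset.HasAntidiagonal.mem_antidiagonal]; exact x.2.1⟩,
      ⟨x.1.1, rfl, x.2.2.1⟩, ⟨x.1.2, rfl, x.2.2.2⟩⟩
  invFun s := ⟨(s.2.1.1, s.2.2.1), by
      rcases s with ⟨⟨⟨i, j⟩, hij⟩, ⟨a, ha, hPa⟩, ⟨b, hb, hQb⟩⟩
      rw [Finset.HasAntidiagonal.mem_antidiagonal] at hij
      exact ⟨by simp [ha, hb, hij], hPa, hQb⟩⟩
  left_inv x := by ext <;> rfl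
  right_inv s := by
    rcases s with ⟨⟨⟨i, j⟩, hij⟩, ⟨a, ha, hPa⟩, ⟨b, hb, hQb⟩⟩
    dsimp only at ha hb
    subst ha; subst hb; rfl

theorem finite_conv {A B : Type*} (f : A → ℕ) (g : B → ℕ) (P : A → Prop) (Q : B → Prop)
    (hA : ∀ i, Finite {a : A // f a = i ∧ P a}) (hB : ∀ j, Finite {b : B // g b = j ∧ Q b})
    (n : ℕ) : Finite {x : A × B // f x.1 + g x.2 = n ∧ P x.1 ∧ Q x.2} := by
  haveI : ∀ ij : (Finset.HasAntidiagonal.antidiagonal n : Finset (ℕ × ℕ)),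
      Finite ({a : A // f a = (ij : ℕ × ℕ).1 ∧ P a} × {b : B // g b = (ij : ℕ × ℕ).2 ∧ Q b}) :=
    fun ij => by haveI := hA (ij : ℕ × ℕ).1; haveI := hB (ij : ℕ × ℕ).2; infer_instance
  exact Finite.of_equiv _ (convEquiv f g P Q n).symm

theorem card_conv {A B : Type*} (f : A → ℕ) (g : B → ℕ) (P : A → Prop) (Q : B → Prop)
    (hA : ∀ i, Finite {a : A // f a = i ∧ P a}) (hB : ∀ j, Finite {b : B // g b = j ∧ Q b})
    (n : ℕ) :
    Nat.card {x : A × B // f x.1 + g x.2 = n ∧ P x.1 ∧ Q x.2}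
      = ∑ ij ∈ Finset.HasAntidiagonal.antidiagonal n,
          Nat.card {a : A // f a = ij.1 ∧ P a} * Nat.card {b : B // g b = ij.2 ∧ Q b} := by
  classical
  rw [Nat.card_congr (convEquiv f g P Q n)]
  haveI : ∀ ij : (Finset.HasAntidiagonal.antidiagonal n : Finset (ℕ × ℕ)),
      Finite ({a : A // f a = (ij : ℕ × ℕ).1 ∧ P a} × {b : B // g b = (ij : ℕ × ℕ).2 ∧ Q b}) :=
    fun ij => by haveI := hA (ij : ℕ × ℕ).1; haveI := hB (ij : ℕ × ℕ).2; infer_instance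
  haveI : ∀ ij : (Finset.HasAntidiagonal.antidiagonal n : Finset (ℕ × ℕ)),
      Fintype ({a : A // f a = (ij : ℕ × ℕ).1 ∧ P a} × {b : B // g b = (ij : ℕ × ℕ).2 ∧ Q b}) :=
    fun ij => Fintype.ofFinite _
  rw [Nat.card_eq_fintype_card, Fintype.card_sigma]
  rw [← Finset.sum_coe_sort (Finset.HasAntidiagonal.antidiagonal n)
    (fun ij => Nat.card {a : A // f a = ij.1 ∧ P a} * Nat.card {b : B // g b = ij.2 ∧ Q b})]
  refine Finset.sum_congr rfl fun ij _ => ?_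
  rw [← Nat.card_eq_fintype_card, Nat.card_prod]

end BT

namespace BT2
/-! ### Divisibility by 3 from a fixed-point-free map of order 3 -/

theorem three_dvd_card {α : Type*} [Finite α] (f : α → α)
    (h3 : ∀ x, f (f (f x)) = x) (h1 : ∀ x, f x ≠ x) : 3 ∣ Nat.card α := by
  classical
  haveI := Fintype.ofFinite α
  have hff : ∀ x, f (f x) ≠ x := by
    intro x h
    have h2 : f (f (f x)) = f x := congrArg f h
    rw [h3 x] at h2
    exact h1 x h2.symm
  have hinj : Function.Injective f := by
    intro a b h
    have : f (f (f a)) = f (f (f b)) := congrArg (fun y => f (f y)) h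
    rwa [h3, h3] at this
  let r : Setoid α := ⟨fun x y => y = x ∨ y = f x ∨ y = f (f x), by
    constructor
    · intro x; exact Or.inl rfl
    · rintro x y (rfl | rfl | rfl)
      · exact Or.inl rfl
      · right; right; rw [h3]
      · right; left; rw [h3]
    · rintro x y z (rfl | rfl | rfl) (rfl | rfl | rfl) <;>
        simp [h3, Or.inl rfl] <;> tauto⟩
  have key : ∀ q : Quotient r, #{x ∈ (Finset.univ : Finset α) | Quotient.mk r x = q} = 3 := by
    intro q
    obtain ⟨a, rfl⟩ := Quotient.exists_rep q
    have : {x ∈ (Finset.univ : Finset α) | Quotient.mk r x = Quotient.mk r a}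
        = {a, f a, f (f a)} := by
      ext x
      simp only [Finset.mem_filter, Finset.mem_univ, true_and, Finset.mem_insert,
        Finset.mem_singleton, Quotient.eq]
      constructor
      · rintro (rfl | h | h)
        · exact Or.inl rfl
        · right; right; rw [h, h3]
        · right; left; rw [h, h3]
      · rintro (rfl | rfl | rfl)
        · exact Or.inl rfl
        · right; right; rw [h3]
        · right; left; rw [h3]
    rw [this]
    rw [Finset.card_insert_of_notMem, Finset.card_insert_of_notMem, Finset.card_singleton]
    · simp only [Finset.mem_singleton]
      intro h; exact h1 a (hinj h).symm
    · simp only [Finset.mem_insert, Finset.mem_singleton]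
      rintro (h | h)
      · exact (h1 a h.symm)
      · exact (hff a h.symm)
  rw [Nat.card_eq_fintype_card, ← Finset.card_univ,
    Finset.card_eq_sum_card_fiberwise (f := Quotient.mk r) (t := Finset.univ)
      (fun x _ => Finset.mem_univ _)]
  rw [Finset.sum_congr rfl fun q _ => key q, Finset.sum_const, smul_eq_mul]
  exact dvd_mul_left 3 _

end BT2

namespace BT3

/-- distinct odd parts -/
def isDO (m : Multiset ℕ) : Prop := m.Nodup ∧ ∀ x ∈ m, Odd x
/-- parts positive and divisible by 4 -/
def isM4 (m : Multiset ℕ) : Prop := ∀ x ∈ m, 0 < x ∧ 4 ∣ x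

noncomputable def DOcount (i : ℕ) : ℕ := Nat.card {m : Multiset ℕ // m.sum = i ∧ isDO m}
noncomputable def M4count (i : ℕ) : ℕ := Nat.card {m : Multiset ℕ // m.sum = i ∧ isM4 m}
noncomputable def P2count (i : ℕ) : ℕ :=
  Nat.card {t : Multiset ℕ × Multiset ℕ //
    t.1.sum + t.2.sum = i ∧ isM4 t.1 ∧ isM4 t.2}
noncomputable def P3count (i : ℕ) : ℕ :=
  Nat.card {t : Multiset ℕ × (Multiset ℕ × Multiset ℕ) //
    t.1.sum + (t.2.1.sum + t.2.2.sum) = i ∧ isM4 t.1 ∧ (isM4 t.2.1 ∧ isM4 t.2.2)}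

theorem finite_aux (i : ℕ) (P : Multiset ℕ → Prop) (hP : ∀ m, P m → ∀ x ∈ m, 0 < x) :
    Finite {m : Multiset ℕ // m.sum = i ∧ P m} := by
  apply Finite.of_injective (fun m => (⟨m.1, fun {x} hx => hP m.1 m.2.2 x hx, m.2.1⟩ : Nat.Partition i))
  intro a b h
  exact Subtype.ext (congrArg Nat.Partition.parts h)

instance finDO (i : ℕ) : Finite {m : Multiset ℕ // m.sum = i ∧ isDO m} :=
  finite_aux i _ (fun _ hm x hx => (hm.2 x hx).pos)

instance finM4 (i : ℕ) : Finite {m : Multiset ℕ // m.sum = i ∧ isM4 m} :=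
  finite_aux i _ (fun _ hm x hx => (hm x hx).1)

end BT3
namespace BT3

instance finP2 (j : ℕ) :
    Finite {t : Multiset ℕ × Multiset ℕ // t.1.sum + t.2.sum = j ∧ isM4 t.1 ∧ isM4 t.2} :=
  BT.finite_conv _ _ _ _ (fun i => finM4 i) (fun i => finM4 i) j

theorem P2count_eq (j : ℕ) :
    P2count j = ∑ ij ∈ Finset.HasAntidiagonal.antidiagonal j, M4count ij.1 * M4count ij.2 :=
  BT.card_conv _ _ _ _ (fun i => finM4 i) (fun i => finM4 i) j

theorem P3count_eq (j : ℕ) :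
    P3count j = ∑ ij ∈ Finset.HasAntidiagonal.antidiagonal j, M4count ij.1 * P2count ij.2 :=
  BT.card_conv (fun m : Multiset ℕ => m.sum)
    (fun b : Multiset ℕ × Multiset ℕ => b.1.sum + b.2.sum) isM4
    (fun b => isM4 b.1 ∧ isM4 b.2) (fun i => finM4 i) (fun i => finP2 i) j

theorem bTriple_eq (n : ℕ)
    (bT : ℕ → ℕ)
    (hbT : bT n = Nat.card {t : Multiset ℕ × Multiset ℕ × Multiset ℕ //
      t.1.sum + t.2.1.sum + t.2.2.sum = n ∧
      t.1.Nodup ∧ (∀ x ∈ t.1, Odd x) ∧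
      (∀ x ∈ t.2.1, 0 < x ∧ 4 ∣ x) ∧
      (∀ x ∈ t.2.2, 0 < x ∧ 4 ∣ x)}) :
    bT n = ∑ ij ∈ Finset.HasAntidiagonal.antidiagonal n, DOcount ij.1 * P2count ij.2 := by
  rw [hbT]
  have e : {t : Multiset ℕ × Multiset ℕ × Multiset ℕ //
      t.1.sum + t.2.1.sum + t.2.2.sum = n ∧
      t.1.Nodup ∧ (∀ x ∈ t.1, Odd x) ∧
      (∀ x ∈ t.2.1, 0 < x ∧ 4 ∣ x) ∧
      (∀ x ∈ t.2.2, 0 < x ∧ 4 ∣ x)} ≃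
      {x : Multiset ℕ × (Multiset ℕ × Multiset ℕ) //
        x.1.sum + (x.2.1.sum + x.2.2.sum) = n ∧ isDO x.1 ∧ (isM4 x.2.1 ∧ isM4 x.2.2)} :=
    Equiv.subtypeEquivRight (fun t => by
      unfold isDO isM4
      constructor
      · rintro ⟨h1, h2, h3, h4, h5⟩
        exact ⟨by omega, ⟨h2, h3⟩, h4, h5⟩
      · rintro ⟨h1, ⟨h2, h3⟩, h4, h5⟩
        exact ⟨by omega, h2, h3, h4, h5⟩)
  rw [Nat.card_congr e]
  exact BT.card_conv (fun m : Multiset ℕ => m.sum)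
    (fun b : Multiset ℕ × Multiset ℕ => b.1.sum + b.2.sum) isDO
    (fun b => isM4 b.1 ∧ isM4 b.2) (fun i => finDO i) (fun i => finP2 i) n

theorem P3count_mod_three (j : ℕ) (h : ¬ 3 ∣ j) : P3count j % 3 = 0 := by
  haveI : Finite {t : Multiset ℕ × (Multiset ℕ × Multiset ℕ) //
      t.1.sum + (t.2.1.sum + t.2.2.sum) = j ∧ isM4 t.1 ∧ (isM4 t.2.1 ∧ isM4 t.2.2)} :=
    BT.finite_conv (fun m : Multiset ℕ => m.sum)
      (fun b : Multiset ℕ × Multiset ℕ => b.1.sum + b.2.sum) isM4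
      (fun b => isM4 b.1 ∧ isM4 b.2) (fun i => finM4 i) (fun i => finP2 i) j
  have hdvd : 3 ∣ P3count j := by
    apply BT2.three_dvd_card
      (f := fun t => ⟨(t.1.2.2, t.1.1, t.1.2.1), by
        obtain ⟨⟨a, b, c⟩, hs, h1, h2, h3⟩ := t
        exact ⟨by dsimp at hs ⊢; omega, h3, h1, h2⟩⟩)
    · rintro ⟨⟨a, b, c⟩, hs, h1, h2, h3⟩; rfl
    · rintro ⟨⟨a, b, c⟩, hs, h1, h2, h3⟩ heq
      have := congrArg Subtype.val heq
      simp only [Prod.mk.injEq] at this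
      obtain ⟨rfl', h5, h6⟩ := this
      apply h
      dsimp at hs
      have e1 : c = a := rfl'
      have e2 : a = b := h5
      subst e1; subst e2
      omega
  omega

end BT3
namespace BT4

open Finset PowerSeries
open scoped Classical

/-- A convenience constructor for the power series whose coefficients indicate a subset. -/
noncomputable def indicatorSeries (α : Type*) [Semiring α] (s : Set ℕ) : PowerSeries α :=
  PowerSeries.mk fun n => if n ∈ s then 1 else 0

variable {α : Type*}

theorem coeff_indicator (s : Set ℕ) [Semiring α] (n : ℕ) :
    coeff (R := α) n (indicatorSeries _ s) = if n ∈ s then 1 else 0 :=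
  coeff_mk _ _

theorem coeff_indicator_pos (s : Set ℕ) [Semiring α] (n : ℕ) (h : n ∈ s) :
    coeff (R := α) n (indicatorSeries _ s) = 1 := by rw [coeff_indicator, if_pos h]

theorem coeff_indicator_neg (s : Set ℕ) [Semiring α] (n : ℕ) (h : n ∉ s) :
    coeff (R := α) n (indicatorSeries _ s) = 0 := by rw [coeff_indicator, if_neg h]

theorem constantCoeff_indicator (s : Set ℕ) [Semiring α] :
    constantCoeff (R := α) (indicatorSeries _ s) = if 0 ∈ s then 1 else 0 :=
  rfl

theorem two_series (i : ℕ) [Semiring α] :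
    1 + (X : PowerSeries α) ^ i.succ = indicatorSeries α {0, i.succ} := by
  ext n
  simp only [coeff_indicator, coeff_one, coeff_X_pow, Set.mem_insert_iff, Set.mem_singleton_iff,
    map_add]
  cases' n with d
  · simp [(Nat.succ_ne_zero i).symm]
  · simp [Nat.succ_ne_zero d]

theorem num_series' [Field α] (i : ℕ) :
    (1 - (X : PowerSeries α) ^ (i + 1))⁻¹ = indicatorSeries α {k | i + 1 ∣ k} := by
  rw [PowerSeries.inv_eq_iff_mul_eq_one]
  · ext n
    cases n with
    | zero => simp [mul_sub, zero_pow, constantCoeff_indicator]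
    | succ n =>
      simp only [coeff_one, if_false, mul_sub, mul_one, coeff_indicator,
        LinearMap.map_sub, reduceCtorEq]
      simp_rw [coeff_mul, coeff_X_pow, coeff_indicator, @boole_mul _ _ _ _]
      erw [@sum_ite _ _ _ _ _ (fun _ => Classical.propDecidable _), sum_ite]
      simp_rw [@filter_filter _ _ _ _ _, sum_const_zero, add_zero, sum_const, nsmul_eq_mul, mul_one,
        sub_eq_iff_eq_add, zero_add]
      symm
      split_ifs with h
      · suffices #{a ∈ antidiagonal (n + 1) | i + 1 ∣ a.fst ∧ a.snd = i + 1} = 1 by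
          simp only [Set.mem_setOf_eq]; convert congr_arg ((↑) : ℕ → α) this; norm_cast
        rw [card_eq_one]
        cases' h with p hp
        refine ⟨((i + 1) * (p - 1), i + 1), ?_⟩
        ext ⟨a₁, a₂⟩
        simp only [mem_filter, Prod.mk.injEq, HasAntidiagonal.mem_antidiagonal, mem_singleton]
        constructor
        · rintro ⟨a_left, ⟨a, rfl⟩, rfl⟩
          refine ⟨?_, rfl⟩
          rw [Nat.mul_sub_left_distrib, ← hp, ← a_left, mul_one, Nat.add_sub_cancel]
        · rintro ⟨rfl, rfl⟩
          match p with
          | 0 => rw [mul_zero] at hp; cases hp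
          | p + 1 => rw [hp]; simp [mul_add]
      · suffices #{a ∈ antidiagonal (n + 1) | i + 1 ∣ a.fst ∧ a.snd = i + 1} = 0 by
          simp only [Set.mem_setOf_eq]; convert congr_arg ((↑) : ℕ → α) this; norm_cast
        rw [card_eq_zero]
        apply eq_empty_of_forall_notMem
        simp only [Prod.forall, mem_filter, not_and, HasAntidiagonal.mem_antidiagonal]
        rintro _ h₁ h₂ ⟨a, rfl⟩ rfl
        apply h
        simp [← h₂]
  · simp [zero_pow]

def mkOdd : ℕ ↪ ℕ :=
  ⟨fun i => 2 * i + 1, fun x y h => by linarith⟩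

theorem mkOdd_apply (i : ℕ) : mkOdd i = 2 * i + 1 := rfl

-- The main workhorse of the partition theorem proof.
theorem partialGF_prop (α : Type*) [CommSemiring α] (n : ℕ) (s : Finset ℕ) (hs : ∀ i ∈ s, 0 < i)
    (c : ℕ → Set ℕ) (hc : ∀ i, i ∉ s → 0 ∈ c i) :
    #{p : n.Partition | (∀ j, p.parts.count j ∈ c j) ∧ ∀ j ∈ p.parts, j ∈ s} =
      coeff (R := α) n (∏ i ∈ s, indicatorSeries α ((· * i) '' c i)) := by
  simp_rw [coeff_prod, coeff_indicator, prod_boole, sum_boole]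
  apply congr_arg
  simp only [mem_univ, forall_true_left, not_and, not_forall, exists_prop,
    Set.mem_image, not_exists]
  set φ : (a : Nat.Partition n) →
    a ∈ filter (fun p ↦ (∀ (j : ℕ), Multiset.count j p.parts ∈ c j) ∧ ∀ j ∈ p.parts, j ∈ s) univ →
    ℕ →₀ ℕ := fun p _ => {
      toFun := fun i => Multiset.count i p.parts • i
      support := Finset.filter (fun i => i ≠ 0) p.parts.toFinset
      mem_support_toFun := fun a => by
        simp only [smul_eq_mul, ne_eq, mul_eq_zero, Multiset.count_eq_zero]
        rw [not_or, not_not]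
        simp only [Multiset.mem_toFinset, not_not, mem_filter] }
  refine Finset.card_bij φ ?_ ?_ ?_
  · intro a ha
    simp only [φ, not_forall, not_exists, not_and, exists_prop, mem_filter]
    rw [mem_finsuppAntidiag]
    dsimp only [ne_eq, smul_eq_mul, id_eq, eq_mpr_eq_cast, le_eq_subset, Finsupp.coe_mk]
    simp only [mem_univ, forall_true_left, not_and, not_forall, exists_prop,
      mem_filter, true_and] at ha
    refine ⟨⟨?_, fun i ↦ ?_⟩, fun i _ ↦ ⟨a.parts.count i, ha.1 i, rfl⟩⟩
    · conv_rhs => simp [← a.parts_sum]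
      rw [sum_multiset_count_of_subset _ s]
      · simp only [smul_eq_mul]
      · intro i
        simp only [Multiset.mem_toFinset, not_not, mem_filter]
        apply ha.2
    · simp only [ne_eq, Multiset.mem_toFinset, not_not, mem_filter, and_imp]
      exact fun hi _ ↦ ha.2 i hi
  · intro p₁ hp₁ p₂ hp₂ h
    apply Nat.Partition.ext
    simp only [true_and, mem_univ, mem_filter] at hp₁ hp₂
    ext i
    simp only [φ, ne_eq, Multiset.mem_toFinset, not_not, smul_eq_mul, Finsupp.mk.injEq] at h
    by_cases hi : i = 0
    · rw [hi]
      rw [Multiset.count_eq_zero_of_notMem]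
      · rw [Multiset.count_eq_zero_of_notMem]
        intro a; exact Nat.lt_irrefl 0 (hs 0 (hp₂.2 0 a))
      intro a; exact Nat.lt_irrefl 0 (hs 0 (hp₁.2 0 a))
    · rw [← mul_left_inj' hi]
      rw [funext_iff] at h
      exact h.2 i
  · simp only [φ, mem_filter, mem_finsuppAntidiag, mem_univ, exists_prop, true_and, and_assoc]
    rintro f ⟨hf, hf₃, hf₄⟩
    have hf' : f ∈ finsuppAntidiag s n := mem_finsuppAntidiag.mpr ⟨hf, hf₃⟩
    simp only [mem_finsuppAntidiag] at hf'
    refine ⟨⟨∑ i ∈ s, Multiset.replicate (f i / i) i, ?_, ?_⟩, ?_, ?_, ?_⟩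
    · intro i hi
      simp only [exists_prop, Multiset.mem_sum, mem_map, Function.Embedding.coeFn_mk] at hi
      rcases hi with ⟨t, ht, z⟩
      apply hs
      rwa [Multiset.eq_of_mem_replicate z]
    · simp_rw [Multiset.sum_sum, Multiset.sum_replicate, Nat.nsmul_eq_mul]
      rw [← hf'.1]
      refine sum_congr rfl fun i hi => Nat.div_mul_cancel ?_
      rcases hf₄ i hi with ⟨w, _, hw₂⟩
      rw [← hw₂]
      exact dvd_mul_left _ _
    · intro i
      simp_rw [Multiset.count_sum', Multiset.count_replicate, sum_ite_eq']
      split_ifs with h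
      · rcases hf₄ i h with ⟨w, hw₁, hw₂⟩
        rwa [← hw₂, Nat.mul_div_cancel _ (hs i h)]
      · exact hc _ h
    · intro i hi
      rw [Multiset.mem_sum] at hi
      rcases hi with ⟨j, hj₁, hj₂⟩
      rwa [Multiset.eq_of_mem_replicate hj₂]
    · ext i
      simp_rw [Multiset.count_sum', Multiset.count_replicate, sum_ite_eq']
      simp only [ne_eq, Multiset.mem_toFinset, not_not, smul_eq_mul, ite_mul,
        zero_mul, Finsupp.coe_mk]
      split_ifs with h
      · apply Nat.div_mul_cancel
        rcases hf₄ i h with ⟨w, _, hw₂⟩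
        apply Dvd.intro_left _ hw₂
      · apply symm
        rw [← Finsupp.notMem_support_iff]
        exact notMem_mono hf'.2 h

end BT4
namespace BT5
open Finset PowerSeries BT3 BT4
open scoped Classical

theorem DOcount_eq_card (i : ℕ) :
    DOcount i = #{p : i.Partition | p.parts.Nodup ∧ ∀ j ∈ p.parts, Odd j} := by
  have e : {m : Multiset ℕ // m.sum = i ∧ isDO m} ≃
      {p : i.Partition // p.parts.Nodup ∧ ∀ j ∈ p.parts, Odd j} :=
    { toFun := fun m => ⟨⟨m.1, fun {x} hx => (m.2.2.2 x hx).pos, m.2.1⟩, m.2.2.1, m.2.2.2⟩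
      invFun := fun p => ⟨p.1.parts, p.1.parts_sum, p.2.1, p.2.2⟩
      left_inv := fun m => rfl
      right_inv := fun p => Subtype.ext (Nat.Partition.ext rfl) }
  rw [DOcount, Nat.card_congr e, Nat.card_eq_fintype_card, Fintype.card_subtype]

theorem M4count_eq_card (i : ℕ) :
    M4count i = #{p : i.Partition | ∀ j ∈ p.parts, 4 ∣ j} := by
  have e : {m : Multiset ℕ // m.sum = i ∧ isM4 m} ≃
      {p : i.Partition // ∀ j ∈ p.parts, 4 ∣ j} :=
    { toFun := fun m => ⟨⟨m.1, fun {x} hx => (m.2.2 x hx).1, m.2.1⟩, fun j hj => (m.2.2 j hj).2⟩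
      invFun := fun p => ⟨p.1.parts, p.1.parts_sum, fun x hx => ⟨p.1.parts_pos hx, p.2 x hx⟩⟩
      left_inv := fun m => rfl
      right_inv := fun p => Subtype.ext (Nat.Partition.ext rfl) }
  rw [M4count, Nat.card_congr e, Nat.card_eq_fintype_card, Fintype.card_subtype]
  congr!

theorem DOcount_coeff (n m : ℕ) (h : n < 2 * m) :
    (DOcount n : ℚ) = coeff (R := ℚ) n (∏ i ∈ range m, (1 + X ^ (2 * i + 1))) := by
  rw [DOcount_eq_card]
  convert partialGF_prop ℚ n ((range m).map mkOdd) ?_ (fun _ => {0, 1}) (fun _ _ => Or.inl rfl)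
    using 2
  · rfl
  · congr 1
    ext p
    simp only [mem_filter, mem_univ, true_and]
    constructor
    · rintro ⟨hnd, hodd⟩
      constructor
      · intro j
        rw [Multiset.nodup_iff_count_le_one] at hnd
        have := hnd j
        interval_cases hj : p.parts.count j <;> simp
      · intro j hj
        have hjn : j ≤ n := by
          simpa [p.parts_sum] using Multiset.single_le_sum (fun _ _ => Nat.zero_le _) _ hj
        obtain ⟨a, ha⟩ := hodd j hj
        simp only [mem_map, mem_range, mkOdd_apply, Function.Embedding.coeFn_mk]
        exact ⟨a, by omega, by omega⟩
    · rintro ⟨hc, hs⟩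
      constructor
      · rw [Multiset.nodup_iff_count_le_one]
        intro j
        have := hc j
        simp only [Set.mem_insert_iff, Set.mem_singleton_iff] at this
        omega
      · intro j hj
        obtain ⟨a, -, rfl⟩ := mem_map.mp (hs j hj)
        exact ⟨a, by simp [mkOdd_apply]⟩
  · rw [Finset.prod_map]
    refine Finset.prod_congr rfl fun i _ => ?_
    have : (mkOdd i : ℕ) = (2 * i).succ := rfl
    rw [this, two_series]
    have hset : ((fun x => x * (2 * i).succ) '' {0, 1}) = {0, (2 * i).succ} := by
      rw [Set.image_pair]
      simp
    rw [hset]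
  · intro i hi
    obtain ⟨a, -, rfl⟩ := mem_map.mp hi
    simp [mkOdd_apply]

def mk4 : ℕ ↪ ℕ :=
  ⟨fun i => 4 * (i + 1), fun x y h => by dsimp only at h; omega⟩

theorem mk4_apply (i : ℕ) : mk4 i = 4 * (i + 1) := rfl

theorem M4count_coeff (n m : ℕ) (h : n < 4 * m + 4) :
    (M4count n : ℚ) = coeff (R := ℚ) n (∏ i ∈ range m, (1 - X ^ (4 * (i + 1)))⁻¹) := by
  rw [M4count_eq_card]
  convert partialGF_prop ℚ n ((range m).map mk4) ?_ (fun _ => Set.univ) (fun _ _ => trivial)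
    using 2
  · rfl
  · congr 1
    ext p
    simp only [mem_filter, mem_univ, true_and]
    constructor
    · rintro hdvd
      refine ⟨fun _ => trivial, fun j hj => ?_⟩
      have hjn : j ≤ n := by
        simpa [p.parts_sum] using Multiset.single_le_sum (fun _ _ => Nat.zero_le _) _ hj
      have hpos : 0 < j := p.parts_pos hj
      obtain ⟨t, rfl⟩ := hdvd j hj
      simp only [mem_map, mem_range, mk4_apply, Function.Embedding.coeFn_mk]
      exact ⟨t - 1, by omega, by omega⟩
    · rintro ⟨-, hs⟩
      intro j hj
      obtain ⟨a, -, rfl⟩ := mem_map.mp (hs j hj)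
      exact ⟨a + 1, by simp [mk4_apply]⟩
  · rw [Finset.prod_map]
    refine Finset.prod_congr rfl fun i _ => ?_
    have h4 : 4 * (i + 1) = (4 * i + 3) + 1 := by ring
    rw [h4, num_series']
    have hset : ((fun x => x * (mk4 i : ℕ)) '' Set.univ) = {k : ℕ | 4 * i + 3 + 1 ∣ k} := by
      ext k
      simp only [Set.mem_image, Set.mem_univ, true_and, Set.mem_setOf_eq, mk4_apply,
        Function.Embedding.coeFn_mk]
      constructor
      · rintro ⟨p, rfl⟩; exact ⟨p, by ring⟩
      · rintro ⟨p, rfl⟩; exact ⟨p, by ring⟩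
    rw [hset]
  · intro i hi
    obtain ⟨a, -, rfl⟩ := mem_map.mp hi
    simp [mk4_apply]

end BT5
namespace BT6
open PowerSeries Finset

noncomputable section

abbrev K : Type := FractionRing (PowerSeries ℚ)

def ι : PowerSeries ℚ →+* K := (algebraMap (PowerSeries ℚ) K : _ →+* K)

theorem ι_inj : Function.Injective ι := IsFractionRing.injective _ _

/-- `Fq m = ∏_{j=1}^m (1 - X^{4j})`. -/
def Fq (m : ℕ) : PowerSeries ℚ := ∏ j ∈ range m, (1 - X ^ (4 * j + 4))

theorem constantCoeff_one_sub_X_pow (m : ℕ) (hm : 0 < m) :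
    constantCoeff (R := ℚ) (1 - X ^ m) = 1 := by
  have h0 : constantCoeff (R := ℚ) (X ^ m : PowerSeries ℚ) = 0 := by
    rw [← coeff_zero_eq_constantCoeff, coeff_X_pow]
    simp [hm.ne]
  rw [map_sub, map_one, h0, sub_zero]

theorem constantCoeff_Fq (m : ℕ) : constantCoeff (R := ℚ) (Fq m) = 1 := by
  rw [Fq, map_prod]
  rw [Finset.prod_congr rfl fun j _ => constantCoeff_one_sub_X_pow (4 * j + 4) (by omega)]
  simp

theorem Fq_ne_zero (m : ℕ) : Fq m ≠ 0 := by
  intro h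
  have := constantCoeff_Fq m
  rw [h, map_zero] at this
  norm_num at this

def FK (m : ℕ) : K := ι (Fq m)

def xK : K := ι X

theorem FK_ne_zero (m : ℕ) : FK m ≠ 0 := by
  intro h
  exact Fq_ne_zero m (ι_inj (by rw [map_zero]; exact h))

theorem xK_ne_zero : xK ≠ 0 := by
  intro h
  have : (X : PowerSeries ℚ) = 0 := ι_inj (by rw [map_zero]; exact h)
  exact X_ne_zero this

theorem one_sub_xK_pow_ne_zero (m : ℕ) (hm : 0 < m) : (1 : K) - xK ^ m ≠ 0 := by
  intro h
  have h2 : ι (1 - X ^ m) = 0 := by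
    rw [map_sub, map_one, map_pow]
    exact h
  have h3 : (1 - X ^ m : PowerSeries ℚ) = 0 := ι_inj (by rw [h2, map_zero])
  have := constantCoeff_one_sub_X_pow m hm
  rw [h3, map_zero] at this
  norm_num at this

theorem FK_zero : FK 0 = 1 := by
  rw [FK, Fq, Finset.prod_range_zero, map_one]

theorem FK_succ (m : ℕ) : FK (m + 1) = FK m * (1 - xK ^ (4 * m + 4)) := by
  rw [FK, Fq, Finset.prod_range_succ, map_mul, ← Fq, ← FK]
  congr 1
  rw [map_sub, map_one, map_pow]
  rfl

/-- Gaussian binomial in the fraction field, base `X^4`. -/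
def gbK (m r : ℕ) : K := if r ≤ m then FK m / (FK r * FK (m - r)) else 0

theorem gbK_eq {m r : ℕ} (h : r ≤ m) : gbK m r = FK m / (FK r * FK (m - r)) := if_pos h

theorem gbK_of_gt {m r : ℕ} (h : m < r) : gbK m r = 0 := if_neg (by omega)

theorem gbK_zero_right (m : ℕ) : gbK m 0 = 1 := by
  rw [gbK_eq (Nat.zero_le m), FK_zero, Nat.sub_zero, one_mul, div_self (FK_ne_zero m)]

theorem gbK_self (m : ℕ) : gbK m m = 1 := by
  rw [gbK_eq le_rfl, Nat.sub_self, FK_zero, mul_one, div_self (FK_ne_zero m)]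

/-- exponent `2k² + k` as a natural number -/
def eZ (k : ℤ) : ℕ := (2 * k ^ 2 + k).toNat

theorem eZ_cast (k : ℤ) : ((eZ k : ℤ)) = 2 * k ^ 2 + k := by
  rw [eZ, Int.toNat_of_nonneg]
  nlinarith [sq_nonneg (4 * k + 1)]

/-- the summand of the finite Jacobi triple product -/
def u (n : ℕ) (k : ℤ) : K :=
  if 0 ≤ (n : ℤ) + k ∧ (n : ℤ) + k ≤ 2 * n then
    xK ^ (eZ k) * gbK (2 * n) ((n : ℤ) + k).toNat
  else 0

end

end BT6
namespace BT6
open PowerSeries Finset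

set_option maxHeartbeats 2000000

theorem key0 : gbK 2 1 = 1 + xK ^ 4 := by
  rw [gbK_eq (by omega), show (2 - 1 : ℕ) = 1 from rfl]
  have h1 := FK_ne_zero 1
  field_simp
  rw [show (2 : ℕ) = 1 + 1 from rfl, FK_succ 1, show (1 : ℕ) = 0 + 1 from rfl, FK_succ 0,
    FK_zero, one_mul]
  ring

theorem key_edge (c : ℕ) :
    gbK (2 * c + 4) (2 * c + 3) = (1 + xK ^ (8 * c + 12)) + xK ^ 4 * gbK (2 * c + 2) (2 * c + 1) := by
  rw [gbK_eq (by omega), gbK_eq (by omega)]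
  rw [show (2 * c + 4) - (2 * c + 3) = 1 from by omega,
    show (2 * c + 2) - (2 * c + 1) = 1 from by omega]
  have h1 := FK_ne_zero 1
  have h2 := FK_ne_zero (2 * c + 3)
  have h3 := FK_ne_zero (2 * c + 1)
  field_simp
  rw [show (2 * c + 4 : ℕ) = (2 * c + 3) + 1 from by ring, FK_succ (2 * c + 3)]
  rw [show (2 * c + 3 : ℕ) = (2 * c + 2) + 1 from by ring, FK_succ (2 * c + 2)]
  rw [show (2 * c + 2 : ℕ) = (2 * c + 1) + 1 from by ring, FK_succ (2 * c + 1)]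
  rw [show (1 : ℕ) = 0 + 1 from rfl, FK_succ 0, FK_zero, one_mul]
  ring

theorem key_edge' (c : ℕ) :
    gbK (2 * c + 4) 1 = (1 + xK ^ (8 * c + 12)) + xK ^ 4 * gbK (2 * c + 2) 1 := by
  rw [gbK_eq (by omega), gbK_eq (by omega)]
  rw [show (2 * c + 4) - 1 = 2 * c + 3 from by omega,
    show (2 * c + 2) - 1 = 2 * c + 1 from by omega]
  have h1 := FK_ne_zero 1
  have h2 := FK_ne_zero (2 * c + 3)
  have h3 := FK_ne_zero (2 * c + 1)
  field_simp
  rw [show (2 * c + 4 : ℕ) = (2 * c + 3) + 1 from by ring, FK_succ (2 * c + 3)]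
  rw [show (2 * c + 3 : ℕ) = (2 * c + 2) + 1 from by ring, FK_succ (2 * c + 2)]
  rw [show (2 * c + 2 : ℕ) = (2 * c + 1) + 1 from by ring, FK_succ (2 * c + 1)]
  rw [show (1 : ℕ) = 0 + 1 from rfl, FK_succ 0, FK_zero, one_mul]
  ring

theorem key_gen (p q : ℕ) :
    gbK (p + q + 4) (p + 2)
      = (1 + xK ^ (4 * (p + q) + 12)) * gbK (p + q + 2) (p + 1)
        + xK ^ (4 * q + 8) * gbK (p + q + 2) p
        + xK ^ (4 * p + 8) * gbK (p + q + 2) (p + 2) := by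
  rw [gbK_eq (by omega), gbK_eq (by omega), gbK_eq (by omega), gbK_eq (by omega)]
  rw [show (p + q + 4) - (p + 2) = q + 2 from by omega,
    show (p + q + 2) - (p + 1) = q + 1 from by omega,
    show (p + q + 2) - p = q + 2 from by omega,
    show (p + q + 2) - (p + 2) = q from by omega]
  have h1 := FK_ne_zero p
  have h2 := FK_ne_zero (p + 1)
  have h3 := FK_ne_zero (p + 2)
  have h4 := FK_ne_zero q
  have h5 := FK_ne_zero (q + 1)
  have h6 := FK_ne_zero (q + 2)
  field_simp
  rw [show (p + q + 4 : ℕ) = (p + q + 3) + 1 from by ring, FK_succ (p + q + 3),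
    show (p + q + 3 : ℕ) = (p + q + 2) + 1 from by ring, FK_succ (p + q + 2)]
  rw [show (p + 2 : ℕ) = (p + 1) + 1 from rfl, FK_succ (p + 1), FK_succ p]
  rw [show (q + 2 : ℕ) = (q + 1) + 1 from rfl, FK_succ (q + 1), FK_succ q]
  ring

end BT6
namespace BT6
open PowerSeries Finset

set_option maxHeartbeats 1000000

theorem u_in (n : ℕ) (k : ℤ) (h1 : -(n : ℤ) ≤ k) (h2 : k ≤ (n : ℤ)) :
    u n k = xK ^ (eZ k) * gbK (2 * n) ((n : ℤ) + k).toNat := by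
  rw [u, if_pos (by omega)]

theorem u_zero (n : ℕ) (k : ℤ) (h : (n : ℤ) < k ∨ k < -(n : ℤ)) : u n k = 0 := by
  rw [u, if_neg (by omega)]

theorem u_rec (n : ℕ) (k : ℤ) :
    u (n + 1) k =
      (1 + xK ^ (8 * n + 4)) * u n k + xK ^ (4 * n + 3) * u n (k - 1)
        + xK ^ (4 * n + 1) * u n (k + 1) := by
  by_cases hbig : (n : ℤ) + 2 ≤ k
  · rw [u_zero (n + 1) k (by push_cast; omega), u_zero n k (by omega),
      u_zero n (k - 1) (by omega), u_zero n (k + 1) (by omega)]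
    ring
  by_cases hsmall : k ≤ -(n : ℤ) - 2
  · rw [u_zero (n + 1) k (by push_cast; omega), u_zero n k (by omega),
      u_zero n (k - 1) (by omega), u_zero n (k + 1) (by omega)]
    ring
  by_cases htop : k = (n : ℤ) + 1
  · subst htop
    rw [u_in (n + 1) ((n : ℤ) + 1) (by push_cast; omega) (by push_cast; omega),
      u_zero n ((n : ℤ) + 1) (by omega), u_zero n ((n : ℤ) + 1 + 1) (by omega),
      show ((n : ℤ) + 1 - 1) = (n : ℤ) from by ring,
      u_in n (n : ℤ) (by omega) (by omega)]
    rw [show ((((n + 1 : ℕ)) : ℤ) + ((n : ℤ) + 1)).toNat = 2 * (n + 1) from by push_cast; omega]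
    rw [show (((n : ℤ)) + (n : ℤ)).toNat = 2 * n from by omega]
    rw [gbK_self, gbK_self]
    rw [show eZ ((n : ℤ) + 1) = eZ ((n : ℤ)) + (4 * n + 3) from by
      have e1 : ((eZ ((n : ℤ) + 1) : ℤ)) = 2 * ((n : ℤ) * n) + 5 * n + 3 := by rw [eZ_cast]; ring
      have e2 : ((eZ ((n : ℤ)) : ℤ)) = 2 * ((n : ℤ) * n) + (n : ℤ) := by rw [eZ_cast]; ring
      omega, pow_add]
    ring
  by_cases hbot : k = -(n : ℤ) - 1
  · subst hbot
    rw [u_in (n + 1) (-(n : ℤ) - 1) (by push_cast; omega) (by push_cast; omega),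
      u_zero n (-(n : ℤ) - 1) (by omega), u_zero n (-(n : ℤ) - 1 - 1) (by omega),
      show (-(n : ℤ) - 1 + 1) = -(n : ℤ) from by ring,
      u_in n (-(n : ℤ)) (by omega) (by omega)]
    rw [show ((((n + 1 : ℕ)) : ℤ) + (-(n : ℤ) - 1)).toNat = 0 from by push_cast; omega]
    rw [show (((n : ℤ)) + -(n : ℤ)).toNat = 0 from by omega]
    rw [gbK_zero_right, gbK_zero_right]
    rw [show eZ (-(n : ℤ) - 1) = eZ (-(n : ℤ)) + (4 * n + 1) from by
      have e1 : ((eZ (-(n : ℤ) - 1) : ℤ)) = 2 * ((n : ℤ) * n) + 3 * n + 1 := by rw [eZ_cast]; ring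
      have e2 : ((eZ (-(n : ℤ)) : ℤ)) = 2 * ((n : ℤ) * n) - (n : ℤ) := by rw [eZ_cast]; ring
      omega, pow_add]
    ring
  by_cases hkn : k = (n : ℤ)
  · subst hkn
    rcases Nat.eq_zero_or_pos n with hn0 | hn0
    · subst hn0
      rw [show ((0 : ℕ) : ℤ) = 0 from rfl]
      rw [u_in 1 0 (by norm_num) (by norm_num), u_in 0 0 (by norm_num) (by norm_num),
        u_zero 0 (0 - 1) (by norm_num), u_zero 0 (0 + 1) (by norm_num)]
      rw [show (((1 : ℕ) : ℤ) + 0).toNat = 1 from by norm_num]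
      rw [show (((0 : ℕ) : ℤ) + 0).toNat = 0 from by norm_num]
      rw [show (2 * 0 : ℕ) = 0 from rfl, gbK_zero_right]
      rw [show (2 * 1 : ℕ) = 2 from rfl, key0]
      rw [show eZ 0 = 0 from rfl]
      norm_num
    · obtain ⟨c, rfl⟩ : ∃ c, n = c + 1 := ⟨n - 1, by omega⟩
      rw [u_in (c + 1 + 1) ((c + 1 : ℕ) : ℤ) (by push_cast; omega) (by push_cast; omega),
        u_in (c + 1) ((c + 1 : ℕ) : ℤ) (by omega) (by omega),
        u_zero (c + 1) (((c + 1 : ℕ) : ℤ) + 1) (by omega),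
        show (((c + 1 : ℕ) : ℤ) - 1) = (c : ℤ) from by push_cast; ring,
        u_in (c + 1) (c : ℤ) (by push_cast; omega) (by push_cast; omega)]
      rw [show ((((c + 1 + 1 : ℕ)) : ℤ) + ((c + 1 : ℕ) : ℤ)).toNat = 2 * c + 3 from by
        push_cast; omega]
      rw [show (((c + 1 : ℕ) : ℤ) + ((c + 1 : ℕ) : ℤ)).toNat = 2 * (c + 1) from by
        push_cast; omega]
      rw [show (((c + 1 : ℕ) : ℤ) + (c : ℤ)).toNat = 2 * c + 1 from by push_cast; omega]
      rw [gbK_self]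
      rw [show 2 * (c + 1 + 1) = 2 * c + 4 from by ring, show 2 * (c + 1) = 2 * c + 2 from by
        ring]
      rw [show eZ (((c + 1 : ℕ)) : ℤ) = eZ ((c : ℤ)) + (4 * c + 3) from by
        have e1 : ((eZ (((c + 1 : ℕ)) : ℤ) : ℤ)) = 2 * ((c : ℤ) * c) + 5 * c + 3 := by
          rw [eZ_cast]; push_cast; ring
        have e2 : ((eZ ((c : ℤ)) : ℤ)) = 2 * ((c : ℤ) * c) + (c : ℤ) := by rw [eZ_cast]; ring
        omega, pow_add]
      linear_combination (xK ^ (eZ ((c : ℤ))) * xK ^ (4 * c + 3)) * key_edge c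
  by_cases hkmn : k = -(n : ℤ)
  · subst hkmn
    rcases Nat.eq_zero_or_pos n with hn0 | hn0
    · exact absurd (by rw [hn0]; norm_num) hkn
    obtain ⟨c, rfl⟩ : ∃ c, n = c + 1 := ⟨n - 1, by omega⟩
    rw [u_in (c + 1 + 1) (-((c + 1 : ℕ) : ℤ)) (by push_cast; omega) (by push_cast; omega),
      u_in (c + 1) (-((c + 1 : ℕ) : ℤ)) (by omega) (by omega),
      u_zero (c + 1) (-((c + 1 : ℕ) : ℤ) - 1) (by omega),
      show (-((c + 1 : ℕ) : ℤ) + 1) = -(c : ℤ) from by push_cast; ring,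
      u_in (c + 1) (-(c : ℤ)) (by push_cast; omega) (by push_cast; omega)]
    rw [show ((((c + 1 + 1 : ℕ)) : ℤ) + -((c + 1 : ℕ) : ℤ)).toNat = 1 from by push_cast; omega]
    rw [show (((c + 1 : ℕ) : ℤ) + -((c + 1 : ℕ) : ℤ)).toNat = 0 from by omega]
    rw [show (((c + 1 : ℕ) : ℤ) + -(c : ℤ)).toNat = 1 from by push_cast; omega]
    rw [gbK_zero_right]
    rw [show 2 * (c + 1 + 1) = 2 * c + 4 from by ring, show 2 * (c + 1) = 2 * c + 2 from by ring]
    rw [show eZ (-((c + 1 : ℕ) : ℤ)) = eZ (-(c : ℤ)) + (4 * c + 1) from by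
      have e1 : ((eZ (-((c + 1 : ℕ) : ℤ)) : ℤ)) = 2 * ((c : ℤ) * c) + 3 * c + 1 := by
        rw [eZ_cast]; push_cast; ring
      have e2 : ((eZ (-(c : ℤ)) : ℤ)) = 2 * ((c : ℤ) * c) - (c : ℤ) := by rw [eZ_cast]; ring
      omega, pow_add]
    linear_combination (xK ^ (eZ (-(c : ℤ))) * xK ^ (4 * c + 1)) * key_edge' c
  -- generic case
  · obtain ⟨p, hp⟩ : ∃ p : ℕ, (p : ℤ) = (n : ℤ) + k - 1 := ⟨((n : ℤ) + k - 1).toNat, by omega⟩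
    obtain ⟨q, hq⟩ : ∃ q : ℕ, (q : ℤ) = (n : ℤ) - k - 1 := ⟨((n : ℤ) - k - 1).toNat, by omega⟩
    rw [u_in (n + 1) k (by push_cast; omega) (by push_cast; omega),
      u_in n k (by omega) (by omega),
      u_in n (k - 1) (by omega) (by omega),
      u_in n (k + 1) (by omega) (by omega)]
    rw [show ((((n + 1 : ℕ)) : ℤ) + k).toNat = p + 2 from by push_cast; omega]
    rw [show (((n : ℤ)) + k).toNat = p + 1 from by omega]
    rw [show (((n : ℤ)) + (k - 1)).toNat = p from by omega]
    rw [show (((n : ℤ)) + (k + 1)).toNat = p + 2 from by omega]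
    rw [show 2 * (n + 1) = p + q + 4 from by omega, show 2 * n = p + q + 2 from by omega,
      show 8 * n + 4 = 4 * (p + q) + 12 from by omega]
    have hpow1 : xK ^ (4 * n + 3) * (xK ^ (eZ (k - 1)) * gbK (p + q + 2) p)
        = xK ^ (eZ k) * (xK ^ (4 * q + 8) * gbK (p + q + 2) p) := by
      rw [← mul_assoc, ← pow_add, ← mul_assoc, ← pow_add]
      congr 2
      have e1 : ((eZ (k - 1)) : ℤ) = 2 * (k * k) - 3 * k + 1 := by rw [eZ_cast]; ring
      have e2 : ((eZ k) : ℤ) = 2 * (k * k) + k := by rw [eZ_cast]; ring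
      omega
    have hpow2 : xK ^ (4 * n + 1) * (xK ^ (eZ (k + 1)) * gbK (p + q + 2) (p + 2))
        = xK ^ (eZ k) * (xK ^ (4 * p + 8) * gbK (p + q + 2) (p + 2)) := by
      rw [← mul_assoc, ← pow_add, ← mul_assoc, ← pow_add]
      congr 2
      have e1 : ((eZ (k + 1)) : ℤ) = 2 * (k * k) + 5 * k + 3 := by rw [eZ_cast]; ring
      have e2 : ((eZ k) : ℤ) = 2 * (k * k) + k := by rw [eZ_cast]; ring
      omega
    linear_combination (xK ^ (eZ k)) * key_gen p q - hpow1 - hpow2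

end BT6
namespace BT6
open PowerSeries Finset

noncomputable section

/-- partial sum of the Jacobi triple product series -/
def S (n : ℕ) : K := ∑ k ∈ Finset.Icc (-(n : ℤ)) (n : ℤ), u n k

/-- partial product for distinct odd parts -/
def DOP (m : ℕ) : PowerSeries ℚ := ∏ i ∈ range m, (1 + X ^ (2 * i + 1))

theorem sum_u_window (n : ℕ) (a b : ℤ) (ha : a ≤ -(n : ℤ)) (hb : (n : ℤ) ≤ b) :
    ∑ k ∈ Finset.Icc a b, u n k = S n := by
  rw [S]
  symm
  apply Finset.sum_subset
  · intro x hx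
    rw [Finset.mem_Icc] at hx ⊢
    omega
  · intro x hx hx2
    rw [Finset.mem_Icc] at hx hx2
    exact u_zero n x (by omega)

theorem JTP (n : ℕ) : ι (DOP (2 * n)) = S n := by
  induction n with
  | zero =>
    rw [DOP, S]
    norm_num
    rw [u_in 0 0 (by norm_num) (by norm_num)]
    rw [show (((0 : ℕ) : ℤ) + 0).toNat = 0 from rfl, gbK_zero_right,
      show eZ 0 = 0 from rfl]
    norm_num
  | succ n ih =>
    have hprod : DOP (2 * (n + 1)) = DOP (2 * n) * ((1 + X ^ (4 * n + 1)) * (1 + X ^ (4 * n + 3))) := by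
      rw [DOP, DOP, show 2 * (n + 1) = (2 * n + 1) + 1 from by ring, Finset.prod_range_succ,
        Finset.prod_range_succ]
      rw [show 2 * (2 * n) + 1 = 4 * n + 1 from by ring, show 2 * (2 * n + 1) + 1 = 4 * n + 3 from by ring]
      ring
    rw [hprod, map_mul, ih]
    have hS : S (n + 1) = S n * ((1 + xK ^ (4 * n + 1)) * (1 + xK ^ (4 * n + 3))) := by
      have h1 : S (n + 1) = ∑ k ∈ Finset.Icc (-(n : ℤ) - 1) ((n : ℤ) + 1), u (n + 1) k := by
        rw [S]
        apply Finset.sum_congr _ (fun _ _ => rfl)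
        congr 1 <;> push_cast <;> ring
      rw [h1]
      have h2 : ∀ k ∈ Finset.Icc (-(n : ℤ) - 1) ((n : ℤ) + 1),
          u (n + 1) k = (1 + xK ^ (8 * n + 4)) * u n k + xK ^ (4 * n + 3) * u n (k - 1)
            + xK ^ (4 * n + 1) * u n (k + 1) := fun k _ => u_rec n k
      rw [Finset.sum_congr rfl h2, Finset.sum_add_distrib, Finset.sum_add_distrib,
        ← Finset.mul_sum, ← Finset.mul_sum, ← Finset.mul_sum]
      have hA : ∑ k ∈ Finset.Icc (-(n : ℤ) - 1) ((n : ℤ) + 1), u n k = S n :=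
        sum_u_window n _ _ (by omega) (by omega)
      have hB : ∑ k ∈ Finset.Icc (-(n : ℤ) - 1) ((n : ℤ) + 1), u n (k - 1) = S n := by
        rw [show ∑ k ∈ Finset.Icc (-(n : ℤ) - 1) ((n : ℤ) + 1), u n (k - 1)
            = ∑ k ∈ Finset.Icc (-(n : ℤ) - 2) ((n : ℤ)), u n k from ?_]
        · exact sum_u_window n _ _ (by omega) (by omega)
        · apply Finset.sum_nbij' (fun k => k - 1) (fun k => k + 1)
          · intro a ha; simp only [Finset.mem_Icc] at *; omega
          · intro a ha; simp only [Finset.mem_Icc] at *; omega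
          · intro a _; omega
          · intro a _; omega
          · intro a _; rfl
      have hC : ∑ k ∈ Finset.Icc (-(n : ℤ) - 1) ((n : ℤ) + 1), u n (k + 1) = S n := by
        rw [show ∑ k ∈ Finset.Icc (-(n : ℤ) - 1) ((n : ℤ) + 1), u n (k + 1)
            = ∑ k ∈ Finset.Icc (-(n : ℤ)) ((n : ℤ) + 2), u n k from ?_]
        · exact sum_u_window n _ _ (by omega) (by omega)
        · apply Finset.sum_nbij' (fun k => k + 1) (fun k => k - 1)
          · intro a ha; simp only [Finset.mem_Icc] at *; omega
          · intro a ha; simp only [Finset.mem_Icc] at *; omega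
          · intro a _; omega
          · intro a _; omega
          · intro a _; rfl
      rw [hA, hB, hC]
      ring
    rw [hS]
    congr 1
    rw [map_mul, map_add, map_add, map_one, map_pow, map_pow]
    rfl

end

end BT6
namespace BT6
open PowerSeries Finset

noncomputable section

def GGp (N : ℕ) : PowerSeries ℚ := ∏ i ∈ range N, (1 - X ^ (4 * i + 4))⁻¹

theorem constantCoeff_prod_one_sub (s : Finset ℕ) :
    constantCoeff (R := ℚ) (∏ j ∈ s, (1 - X ^ (4 * j + 4))) = 1 := by
  rw [map_prod, Finset.prod_congr rfl fun j _ => constantCoeff_one_sub_X_pow (4 * j + 4) (by omega)]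
  simp

theorem Fq_mul_GGp (N : ℕ) : Fq N * GGp N = 1 := by
  rw [Fq, GGp, ← Finset.prod_mul_distrib]
  rw [Finset.prod_congr rfl fun i _ => PowerSeries.mul_inv_cancel _ (by
    rw [constantCoeff_one_sub_X_pow (4 * i + 4) (by omega)]; norm_num)]
  simp

theorem Fq_split (a b : ℕ) (h : a ≤ b) :
    Fq b = Fq a * ∏ j ∈ Finset.Ico a b, (1 - X ^ (4 * j + 4)) := by
  rw [Fq, Fq, Finset.range_eq_Ico, ← Finset.prod_Ico_consecutive _ (Nat.zero_le a) h, Finset.range_eq_Ico]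

theorem prod_sub_one_dvd (M : ℕ) (s : Finset ℕ) (h : ∀ j ∈ s, M ≤ 4 * j + 4) :
    (X : PowerSeries ℚ) ^ M ∣ (∏ j ∈ s, (1 - X ^ (4 * j + 4))) - 1 := by
  classical
  induction s using Finset.induction with
  | empty => simp
  | @insert a s' hx ih =>
    rw [Finset.prod_insert hx]
    have h1 : (X : PowerSeries ℚ) ^ M ∣ (∏ j ∈ s', (1 - (X : PowerSeries ℚ) ^ (4 * j + 4))) - 1 :=
      ih (fun j hj => h j (Finset.mem_insert_of_mem hj))
    have h2 : (X : PowerSeries ℚ) ^ M ∣ X ^ (4 * a + 4) :=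
      pow_dvd_pow X (h a (Finset.mem_insert_self a s'))
    have key : (1 - (X : PowerSeries ℚ) ^ (4 * a + 4)) * (∏ j ∈ s', (1 - (X : PowerSeries ℚ) ^ (4 * j + 4))) - 1
        = ((∏ j ∈ s', (1 - (X : PowerSeries ℚ) ^ (4 * j + 4))) - 1)
          - (X : PowerSeries ℚ) ^ (4 * a + 4) * (∏ j ∈ s', (1 - (X : PowerSeries ℚ) ^ (4 * j + 4))) := by ring
    rw [key]
    exact dvd_sub h1 (Dvd.dvd.mul_right h2 _)

theorem eZ_ge (k : ℤ) : k.natAbs ≤ eZ k := by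
  have h := eZ_cast k
  have h2 : k * k ≥ k := by nlinarith [sq_nonneg (k - 1)]
  have h3 : k * k ≥ -k := by nlinarith [sq_nonneg (k + 1)]
  have h4 : (eZ k : ℤ) = 2 * (k * k) + k := by rw [h]; ring
  omega

theorem term_repr (M N n : ℕ) (hNM : M ≤ 4 * N + 4) (hnN : N + M ≤ n) (k : ℤ) :
    ∃ Z : PowerSeries ℚ, ι Z = u n k * ι (Fq N) ∧
      (X : PowerSeries ℚ) ^ M ∣ Z - (if eZ k < M then X ^ (eZ k) else 0) := by
  by_cases hk : -(n : ℤ) ≤ k ∧ k ≤ (n : ℤ)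
  · obtain ⟨r, hr⟩ : ∃ r : ℕ, (r : ℤ) = (n : ℤ) + k := ⟨((n : ℤ) + k).toNat, by omega⟩
    have hru : u n k = xK ^ (eZ k) * gbK (2 * n) r := by
      rw [u_in n k hk.1 hk.2, show ((n : ℤ) + k).toNat = r from by omega]
    have hr2n : r ≤ 2 * n := by omega
    have hgb : gbK (2 * n) r = FK (2 * n) / (FK r * FK (2 * n - r)) := gbK_eq hr2n
    by_cases hrN : N ≤ r
    · -- r ≥ N : use W * T⁻¹
      set T : PowerSeries ℚ := ∏ j ∈ Finset.Ico N r, (1 - X ^ (4 * j + 4)) with hTdef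
      set W : PowerSeries ℚ := ∏ j ∈ Finset.Ico (2 * n - r) (2 * n), (1 - X ^ (4 * j + 4))
        with hWdef
      have hT1 : Fq r = Fq N * T := Fq_split N r hrN
      have hW1 : Fq (2 * n) = Fq (2 * n - r) * W := Fq_split _ _ (by omega)
      have hTT : T * T⁻¹ = 1 :=
        PowerSeries.mul_inv_cancel _ (by rw [hTdef, constantCoeff_prod_one_sub]; norm_num)
      refine ⟨X ^ (eZ k) * (W * T⁻¹), ?_, ?_⟩
      · have key : (X ^ (eZ k) * (W * T⁻¹)) * (Fq r * Fq (2 * n - r))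
            = (X ^ (eZ k) * Fq (2 * n)) * Fq N := by
          rw [hT1, hW1]
          linear_combination (X ^ (eZ k) * Fq N * Fq (2 * n - r) * W) * hTT
        have hne : FK r * FK (2 * n - r) ≠ 0 :=
          mul_ne_zero (FK_ne_zero r) (FK_ne_zero (2 * n - r))
        apply mul_right_cancel₀ hne
        calc ι (X ^ (eZ k) * (W * T⁻¹)) * (FK r * FK (2 * n - r))
            = ι ((X ^ (eZ k) * (W * T⁻¹)) * (Fq r * Fq (2 * n - r))) := by
              rw [FK, FK, ← map_mul, ← map_mul]
          _ = ι ((X ^ (eZ k) * Fq (2 * n)) * Fq N) := by rw [key]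
          _ = (xK ^ (eZ k) * FK (2 * n)) * ι (Fq N) := by
              rw [map_mul, map_mul, map_pow]; rfl
          _ = u n k * ι (Fq N) * (FK r * FK (2 * n - r)) := by
              rw [hru, hgb]
              field_simp
              rw [eq_div_iff hne]; ring
      · by_cases heM : eZ k < M
        · rw [if_pos heM]
          have hkM : k.natAbs < M := lt_of_le_of_lt (eZ_ge k) heM
          have hWT : (X : PowerSeries ℚ) ^ M ∣ W - T := by
            have hW2 : (X : PowerSeries ℚ) ^ M ∣ W - 1 := by
              apply prod_sub_one_dvd
              intro j hj
              rw [Finset.mem_Ico] at hj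
              omega
            have hT2 : (X : PowerSeries ℚ) ^ M ∣ T - 1 := by
              apply prod_sub_one_dvd
              intro j hj
              rw [Finset.mem_Ico] at hj
              omega
            have : W - T = (W - 1) - (T - 1) := by ring
            rw [this]
            exact dvd_sub hW2 hT2
          have key2 : X ^ (eZ k) * (W * T⁻¹) - X ^ (eZ k)
              = (X ^ (eZ k) * T⁻¹) * (W - T) + X ^ (eZ k) * (T * T⁻¹ - 1) := by ring
          rw [key2]
          apply dvd_add
          · exact Dvd.dvd.mul_left hWT _
          · rw [hTT, sub_self, mul_zero]
            exact dvd_zero _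
        · rw [if_neg heM]
          rw [sub_zero]
          exact Dvd.dvd.mul_right (pow_dvd_pow X (by omega)) _
    · -- r < N
      set T' : PowerSeries ℚ := ∏ j ∈ Finset.Ico r N, (1 - X ^ (4 * j + 4)) with hTdef
      set W : PowerSeries ℚ := ∏ j ∈ Finset.Ico (2 * n - r) (2 * n), (1 - X ^ (4 * j + 4))
        with hWdef
      have hT1 : Fq N = Fq r * T' := Fq_split r N (by omega)
      have hW1 : Fq (2 * n) = Fq (2 * n - r) * W := Fq_split _ _ (by omega)
      refine ⟨X ^ (eZ k) * (W * T'), ?_, ?_⟩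
      · have key : (X ^ (eZ k) * (W * T')) * (Fq r * Fq (2 * n - r))
            = (X ^ (eZ k) * Fq (2 * n)) * Fq N := by
          rw [hT1, hW1]; ring
        have hne : FK r * FK (2 * n - r) ≠ 0 :=
          mul_ne_zero (FK_ne_zero r) (FK_ne_zero (2 * n - r))
        apply mul_right_cancel₀ hne
        calc ι (X ^ (eZ k) * (W * T')) * (FK r * FK (2 * n - r))
            = ι ((X ^ (eZ k) * (W * T')) * (Fq r * Fq (2 * n - r))) := by
              rw [FK, FK, ← map_mul, ← map_mul]
          _ = ι ((X ^ (eZ k) * Fq (2 * n)) * Fq N) := by rw [key]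
          _ = (xK ^ (eZ k) * FK (2 * n)) * ι (Fq N) := by rw [map_mul, map_mul, map_pow]; rfl
          _ = u n k * ι (Fq N) * (FK r * FK (2 * n - r)) := by
              rw [hru, hgb]
              field_simp
              rw [eq_div_iff hne]; ring
      · have heM : ¬ (eZ k < M) := by
          have : M ≤ k.natAbs := by omega
          have := eZ_ge k
          omega
        rw [if_neg heM, sub_zero]
        exact Dvd.dvd.mul_right (pow_dvd_pow X (by omega)) _
  · -- |k| > n : u = 0, take Z = 0
    refine ⟨0, ?_, ?_⟩
    · rw [map_zero, u_zero n k (by omega), zero_mul]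
    · have heM : ¬ (eZ k < M) := by
        have h1 := eZ_ge k
        have : M ≤ k.natAbs := by omega
        omega
      rw [if_neg heM, sub_zero]
      exact dvd_zero _

theorem main_dvd (M N n : ℕ) (hNM : M ≤ 4 * N + 4) (hnN : N + M ≤ n) :
    (X : PowerSeries ℚ) ^ M ∣
      DOP (2 * n) * Fq N
        - ∑ k ∈ Finset.Icc (-(n : ℤ)) (n : ℤ), (if eZ k < M then X ^ (eZ k) else 0) := by
  choose Z hZ1 hZ2 using term_repr M N n hNM hnN
  have hsum : DOP (2 * n) * Fq N = ∑ k ∈ Finset.Icc (-(n : ℤ)) (n : ℤ), Z k := by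
    apply ι_inj
    rw [map_mul, JTP n, S, map_sum, Finset.sum_mul]
    exact Finset.sum_congr rfl fun k _ => (hZ1 k).symm
  rw [hsum, ← Finset.sum_sub_distrib]
  exact Finset.dvd_sum fun k _ => hZ2 k

end

end BT6
namespace BT7
open PowerSeries Finset BT3 BT5 BT6

theorem GGp_eq (N : ℕ) : GGp N = ∏ i ∈ range N, (1 - (X : PowerSeries ℚ) ^ (4 * (i + 1)))⁻¹ :=
  Finset.prod_congr rfl fun i _ => by rw [show 4 * (i + 1) = 4 * i + 4 from by ring]

theorem M4_coeff' (j N : ℕ) (h : j < 4 * N + 4) :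
    (M4count j : ℚ) = coeff (R := ℚ) j (GGp N) := by
  rw [GGp_eq]
  exact M4count_coeff j N h

theorem P2_coeff (j N : ℕ) (h : j < 4 * N + 4) :
    (P2count j : ℚ) = coeff (R := ℚ) j (GGp N * GGp N) := by
  rw [coeff_mul, P2count_eq]
  push_cast
  refine Finset.sum_congr rfl fun ij hij => ?_
  rw [Finset.HasAntidiagonal.mem_antidiagonal] at hij
  rw [M4_coeff' ij.1 N (by omega), M4_coeff' ij.2 N (by omega)]

theorem P3_coeff (j N : ℕ) (h : j < 4 * N + 4) :
    (P3count j : ℚ) = coeff (R := ℚ) j (GGp N * (GGp N * GGp N)) := by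
  rw [coeff_mul, P3count_eq]
  push_cast
  refine Finset.sum_congr rfl fun ij hij => ?_
  rw [Finset.HasAntidiagonal.mem_antidiagonal] at hij
  rw [M4_coeff' ij.1 N (by omega), P2_coeff ij.2 N (by omega)]

theorem B_coeff (n₀ n N : ℕ) (h1 : n₀ < 2 * (2 * n)) (h2 : n₀ < 4 * N + 4) :
    ((∑ ij ∈ Finset.HasAntidiagonal.antidiagonal n₀, DOcount ij.1 * P2count ij.2 : ℕ) : ℚ)
      = coeff (R := ℚ) n₀ (DOP (2 * n) * (GGp N * GGp N)) := by
  rw [coeff_mul]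
  push_cast
  refine Finset.sum_congr rfl fun ij hij => ?_
  rw [Finset.HasAntidiagonal.mem_antidiagonal] at hij
  have hD : DOP (2 * n) = ∏ i ∈ range (2 * n), (1 + (X : PowerSeries ℚ) ^ (2 * i + 1)) := rfl
  rw [hD, ← DOcount_coeff ij.1 (2 * n) (by omega), P2_coeff ij.2 N (by omega)]

theorem count_identity (n₀ : ℕ) :
    (∑ ij ∈ Finset.HasAntidiagonal.antidiagonal n₀, DOcount ij.1 * P2count ij.2)
      = ∑ k ∈ Finset.Icc (-(2 * n₀ + 2 : ℕ) : ℤ) ((2 * n₀ + 2 : ℕ) : ℤ),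
          (if eZ k < n₀ + 1 then P3count (n₀ - eZ k) else 0) := by
  set M : ℕ := n₀ + 1 with hM
  set N : ℕ := n₀ + 1 with hN
  set n : ℕ := 2 * n₀ + 2 with hn
  have hNM : M ≤ 4 * N + 4 := by omega
  have hnN : N + M ≤ n := by omega
  have hdvd := main_dvd M N n hNM hnN
  set G3 : PowerSeries ℚ := GGp N * (GGp N * GGp N) with hG3
  set Ψ : PowerSeries ℚ :=
    ∑ k ∈ Finset.Icc (-(n : ℤ)) (n : ℤ), (if eZ k < M then (X : PowerSeries ℚ) ^ (eZ k) else 0)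
    with hΨ
  have hQ : ((∑ ij ∈ Finset.HasAntidiagonal.antidiagonal n₀, DOcount ij.1 * P2count ij.2 : ℕ) : ℚ)
      = coeff (R := ℚ) n₀ (DOP (2 * n) * (GGp N * GGp N)) := B_coeff n₀ n N (by omega) (by omega)
  have hFG := Fq_mul_GGp N
  have hswap : DOP (2 * n) * (GGp N * GGp N) = (DOP (2 * n) * Fq N) * G3 := by
    rw [hG3]
    linear_combination (-(DOP (2 * n) * GGp N * GGp N)) * hFG
  have hzero : coeff (R := ℚ) n₀ ((DOP (2 * n) * Fq N) * G3) = coeff (R := ℚ) n₀ (Ψ * G3) := by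
    have hd2 : (X : PowerSeries ℚ) ^ M ∣ (DOP (2 * n) * Fq N) * G3 - Ψ * G3 := by
      rw [show (DOP (2 * n) * Fq N) * G3 - Ψ * G3 = (DOP (2 * n) * Fq N - Ψ) * G3 from by ring]
      exact Dvd.dvd.mul_right hdvd G3
    have := (PowerSeries.X_pow_dvd_iff.mp hd2) n₀ (by omega)
    rw [map_sub, sub_eq_zero] at this
    exact this
  have hpsi : coeff (R := ℚ) n₀ (Ψ * G3)
      = ∑ k ∈ Finset.Icc (-(n : ℤ)) (n : ℤ),
          (if eZ k < M then ((P3count (n₀ - eZ k) : ℕ) : ℚ) else 0) := by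
    rw [hΨ, Finset.sum_mul, map_sum]
    refine Finset.sum_congr rfl fun k _ => ?_
    split_ifs with h
    · rw [coeff_X_pow_mul', if_pos (by omega : eZ k ≤ n₀)]
      exact (P3_coeff (n₀ - eZ k) N (by omega)).symm
    · rw [zero_mul, map_zero]
  have final : ((∑ ij ∈ Finset.HasAntidiagonal.antidiagonal n₀, DOcount ij.1 * P2count ij.2 : ℕ) : ℚ)
      = ((∑ k ∈ Finset.Icc (-(n : ℤ)) (n : ℤ),
          (if eZ k < M then P3count (n₀ - eZ k) else 0) : ℕ) : ℚ) := by
    rw [hQ, hswap, hzero, hpsi]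
    push_cast
    refine Finset.sum_congr rfl fun k _ => ?_
    split_ifs <;> norm_num
  exact_mod_cast final

theorem eZ_mod_three (k : ℤ) : eZ k % 3 = 0 ∨ eZ k % 3 = 1 := by
  obtain ⟨q, c, hc, rfl⟩ : ∃ q c : ℤ, (c = 0 ∨ c = 1 ∨ c = 2) ∧ k = 3 * q + c :=
    ⟨k / 3, k % 3, by omega, by omega⟩
  rcases hc with rfl | rfl | rfl
  · have h : (eZ (3 * q + 0) : ℤ) = 18 * (q * q) + 3 * q := by rw [eZ_cast]; ring
    omega
  · have h : (eZ (3 * q + 1) : ℤ) = 18 * (q * q) + 15 * q + 3 := by rw [eZ_cast]; ring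
    omega
  · have h : (eZ (3 * q + 2) : ℤ) = 18 * (q * q) + 27 * q + 10 := by rw [eZ_cast]; ring
    omega

end BT7

end BTAux

/-- `b(3n+2) ≡ 0 (mod 3)` for all `n ≥ 0`. -/
theorem bTriple_3n_add_2_mod_three (n : ℕ) : bTriple (3 * n + 2) % 3 = 0 := by
  have h1 : bTriple (3 * n + 2)
      = ∑ ij ∈ Finset.HasAntidiagonal.antidiagonal (3 * n + 2), BT3.DOcount ij.1 * BT3.P2count ij.2 :=
    BT3.bTriple_eq (3 * n + 2) bTriple rfl
  rw [h1, BT7.count_identity (3 * n + 2)]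
  rw [Finset.sum_nat_mod]
  have hterm : ∀ k ∈ Finset.Icc (-(2 * (3 * n + 2) + 2 : ℕ) : ℤ) ((2 * (3 * n + 2) + 2 : ℕ) : ℤ),
      (if BT6.eZ k < (3 * n + 2) + 1 then BT3.P3count ((3 * n + 2) - BT6.eZ k) else 0) % 3
        = 0 := by
    intro k _
    split_ifs with h
    · apply BT3.P3count_mod_three
      intro hdvd
      rcases BT7.eZ_mod_three k with h3 | h3 <;> omega
    · rfl
  rw [Finset.sum_congr rfl hterm, Finset.sum_const_zero]
  rfl
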